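/- arXiv:0707.2618 — 3 statements merged into one kernel-verified Lean document; each statement's English description precedes it below -/
import Mathlib

section
/- Given real numbers ω_f, ω_b, ω_i (the pre-collision velocity of rod k, post-collision velocity of rod k, and initial velocity of rod k+1), c = cos²β₁ with 0 < c < 1, the system of equations ω_f² = ω_b² + ω_i² and ω_f·c = ω_b·c + ω_i, with ω_i ≠ 0, has the unique solution ω_i = f₊·ω_f and ω_b = ω_i/f₋, where f₊ = 2/(c + 1/c) and f₋ = 2/(c - 1/c). -/
theorem collision_solution (c ωf ωb ωi : ℝ) (hc0 : 0 < c) (hc1 : c < 1)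
    (hωi : ωi ≠ 0)
    (henergy : ωf ^ 2 = ωb ^ 2 + ωi ^ 2)
    (hmomentum : ωf * c = ωb * c + ωi) :
    ωi = (2 / (c + 1 / c)) * ωf ∧ ωb = ωi / (2 / (c - 1 / c)) := by
  have hc : c ≠ 0 := ne_of_gt hc0
  have hsum : ωf + ωb = c * ωi := by
    have h1 : (ωf - ωb) * c = ωi := by linarith
    have h2 : (ωf - ωb) * (ωf + ωb) = ωi * ωi := by ring_nf; nlinarith
    have h3 : ωi * (ωf + ωb) = ωi * (c * ωi) := by
      calc ωi * (ωf + ωb) = c * ((ωf - ωb) * (ωf + ωb)) := by rw [← h1]; ring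
        _ = c * (ωi * ωi) := by rw [h2]
        _ = ωi * (c * ωi) := by ring
    exact mul_left_cancel₀ hωi h3
  constructor
  · field_simp
    nlinarith [hsum, hmomentum, sq_nonneg c]
  · field_simp
    nlinarith [hsum, hmomentum]
end

section
/- The complete elliptic integral of the first kind K(k) = ∫₀^{π/2} dt/√(1 - k²sin²t) tends to +∞ as k → 1⁻; more precisely, K(k) - ln(4/√(1-k²)) → 0 as k → 1⁻. -/
open Real Filter intervalIntegral

lemma pos_aux {k t : ℝ} (hk : k^2 < 1) : 0 < 1 - k^2 * Real.sin t^2 := by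
  nlinarith [Real.sin_sq_le_one t, sq_nonneg k, sq_nonneg (Real.sin t)]

lemma cont_aux {k : ℝ} (hk : k^2 < 1) (g : ℝ → ℝ) (hg : Continuous g) :
    Continuous (fun t => g t / Real.sqrt (1 - k^2 * Real.sin t^2)) := by
  apply hg.div
  · exact Real.continuous_sqrt.comp (by continuity)
  · intro t
    exact ne_of_gt (Real.sqrt_pos.mpr (pos_aux hk))

lemma integralA {k : ℝ} (hk0 : 0 < k) (hk : k < 1) :
    ∫ t in (0:ℝ)..(π/2), Real.sin t * (1 / Real.sqrt (1 - k^2 * Real.sin t^2))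
      = (1/k) * Real.log ((1+k) / Real.sqrt (1 - k^2)) := by
  have hk2 : k^2 < 1 := by nlinarith
  have h := intervalIntegral.integral_eq_sub_of_hasDerivAt
    (f := fun t => -(1/k) * Real.log (k * Real.cos t + Real.sqrt (1 - k^2 * Real.sin t^2)))
    (f' := fun t => Real.sin t * (1 / Real.sqrt (1 - k^2 * Real.sin t^2)))
    (a := (0:ℝ)) (b := π/2) ?_ ?_
  · rw [h]
    simp only [Real.cos_pi_div_two, Real.sin_pi_div_two, Real.cos_zero, Real.sin_zero]
    rw [show (1:ℝ)^2 = 1 by norm_num]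
    rw [mul_zero, zero_add, mul_one]
    rw [show k * 1 + Real.sqrt (1 - k^2 * 0^2) = k + 1 by
      rw [show (1:ℝ) - k^2*0^2 = 1 by ring, Real.sqrt_one]; ring]
    rw [Real.log_div (by positivity) (ne_of_gt (Real.sqrt_pos.mpr (by nlinarith)))]
    ring_nf
  · intro t ht
    rw [Set.uIcc_of_le (by positivity)] at ht
    obtain ⟨ht0, ht1⟩ := ht
    have hc : 0 ≤ Real.cos t := Real.cos_nonneg_of_mem_Icc ⟨by linarith [ht0, pi_pos], ht1⟩
    have hu : 0 < 1 - k^2 * Real.sin t^2 := pos_aux hk2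
    have hsq : 0 < Real.sqrt (1 - k^2 * Real.sin t^2) := Real.sqrt_pos.mpr hu
    have hg : 0 < k * Real.cos t + Real.sqrt (1 - k^2 * Real.sin t^2) := by positivity
    -- derivative of inner sqrt
    have h1 : HasDerivAt (fun t => 1 - k^2 * Real.sin t^2)
        (-(k^2 * (2 * Real.sin t * Real.cos t))) t := by
      have := ((Real.hasDerivAt_sin t).pow 2).const_mul (k^2)
      have := (hasDerivAt_const t (1:ℝ)).sub this
      refine this.congr_deriv ?_
      ring
    have h2 : HasDerivAt (fun t => Real.sqrt (1 - k^2 * Real.sin t^2))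
        (-(k^2 * (2 * Real.sin t * Real.cos t)) / (2 * Real.sqrt (1 - k^2 * Real.sin t^2))) t :=
      (Real.hasDerivAt_sqrt (ne_of_gt hu)).comp t h1 |>.congr_deriv (by ring)
    have h3 : HasDerivAt (fun t => k * Real.cos t + Real.sqrt (1 - k^2 * Real.sin t^2))
        (k * (-Real.sin t) + -(k^2 * (2 * Real.sin t * Real.cos t)) / (2 * Real.sqrt (1 - k^2 * Real.sin t^2))) t :=
      ((Real.hasDerivAt_cos t).const_mul k).add h2
    have h4 := (Real.hasDerivAt_log (ne_of_gt hg)).comp t h3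
    have h5 := h4.const_mul (-(1/k))
    refine h5.congr_deriv ?_
    have hss : Real.sqrt (1 - k^2 * Real.sin t^2) ^ 2 = 1 - k^2 * Real.sin t^2 :=
      Real.sq_sqrt hu.le
    field_simp
    nlinarith [hsq, hg, sq_nonneg (Real.sin t)]
  · apply Continuous.intervalIntegrable
    exact (continuous_sin.mul (by
      have := cont_aux hk2 (fun _ => (1:ℝ)) continuous_const
      simpa using this))


lemma pos_aux' {k t : ℝ} (hk : k^2 < 1) : 0 < 1 - k^2 * Real.sin t^2 := by
  nlinarith [Real.sin_sq_le_one t, sq_nonneg k, sq_nonneg (Real.sin t)]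

lemma limit_integral : ∫ t in (0:ℝ)..(π/2), Real.cos t / (1 + Real.sin t) = Real.log 2 := by
  have h := intervalIntegral.integral_eq_sub_of_hasDerivAt
    (f := fun t => Real.log (1 + Real.sin t))
    (f' := fun t => Real.cos t / (1 + Real.sin t)) (a := (0:ℝ)) (b := π/2) ?_ ?_
  · rw [h]; norm_num
  · intro t ht
    rw [Set.uIcc_of_le (by positivity)] at ht
    have hsin : 0 ≤ Real.sin t :=
      Real.sin_nonneg_of_nonneg_of_le_pi ht.1 (le_trans ht.2 (by linarith [pi_pos]))
    have hs : 0 < 1 + Real.sin t := by linarith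
    have := (Real.hasDerivAt_log (ne_of_gt hs)).comp t
      ((hasDerivAt_const t (1:ℝ)).add (Real.hasDerivAt_sin t))
    refine this.congr_deriv ?_
    field_simp
    ring
  · apply ContinuousOn.intervalIntegrable
    apply ContinuousOn.div continuous_cos.continuousOn (by fun_prop)
    intro t ht
    rw [Set.uIcc_of_le (by positivity)] at ht
    have hsin : 0 ≤ Real.sin t :=
      Real.sin_nonneg_of_nonneg_of_le_pi ht.1 (le_trans ht.2 (by linarith [pi_pos]))
    intro h; linarith [h]

lemma Btendsto :
    Tendsto (fun k : ℝ => ∫ t in (0:ℝ)..(π/2),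
        (1 - Real.sin t) * (1 / Real.sqrt (1 - k^2 * Real.sin t^2)))
      (nhdsWithin 1 (Set.Iio 1)) (nhds (Real.log 2)) := by
  rw [← limit_integral]
  have hmem : ∀ᶠ k : ℝ in nhdsWithin 1 (Set.Iio 1), k ∈ Set.Ioo (1/2 : ℝ) 1 := by
    rw [eventually_iff, mem_nhdsWithin]
    exact ⟨Set.Ioi (1/2:ℝ), isOpen_Ioi, by norm_num, fun x hx => ⟨hx.1, hx.2⟩⟩
  apply intervalIntegral.tendsto_integral_filter_of_dominated_convergence (fun _ => (2:ℝ))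
  · filter_upwards [hmem] with k hk
    have hk2 : k^2 < 1 := by nlinarith [hk.1, hk.2]
    apply Continuous.aestronglyMeasurable
    apply Continuous.mul (by continuity)
    apply continuous_const.div (Real.continuous_sqrt.comp (by continuity))
    intro t; exact ne_of_gt (Real.sqrt_pos.mpr (pos_aux' hk2))
  · filter_upwards [hmem] with k hk
    have hk2 : k^2 < 1 := by nlinarith [hk.1, hk.2]
    refine Filter.Eventually.of_forall (fun t ht => ?_)
    rw [Set.uIoc_of_le (by positivity)] at ht
    obtain ⟨ht0, ht1⟩ := ht
    have hs0 : 0 ≤ Real.sin t := Real.sin_nonneg_of_nonneg_of_le_pi ht0.le (by linarith [pi_pos])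
    have hs1 : Real.sin t ≤ 1 := Real.sin_le_one t
    have hc : 0 ≤ Real.cos t := Real.cos_nonneg_of_mem_Icc ⟨by linarith [pi_pos, ht0], ht1⟩
    have hu : 0 < 1 - k^2 * Real.sin t^2 := pos_aux' hk2
    have hcos2 : Real.cos t^2 = 1 - Real.sin t^2 := by
      have := Real.sin_sq_add_cos_sq t; linarith
    have hkc : 0 ≤ k * Real.cos t := mul_nonneg (by linarith [hk.1]) hc
    have hsq : k * Real.cos t ≤ Real.sqrt (1 - k^2 * Real.sin t^2) := by
      rw [show k * Real.cos t = Real.sqrt ((k * Real.cos t)^2) by rw [Real.sqrt_sq hkc]]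
      apply Real.sqrt_le_sqrt
      nlinarith [hk2]
    have hsqpos : 0 < Real.sqrt (1 - k^2 * Real.sin t^2) := Real.sqrt_pos.mpr hu
    rw [Real.norm_eq_abs, abs_of_nonneg (mul_nonneg (by linarith) (by positivity))]
    calc (1 - Real.sin t) * (1 / Real.sqrt (1 - k^2 * Real.sin t^2))
        = (1 - Real.sin t) / Real.sqrt (1 - k^2 * Real.sin t^2) := by ring
      _ ≤ 2 := by
          rw [div_le_iff₀ hsqpos]
          have h3 : 1 - Real.sin t ≤ Real.cos t := by
            nlinarith [hcos2, hs0, hs1, hc]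
          nlinarith [hk.1, hc, hsq]
  · apply Continuous.intervalIntegrable; continuity
  · refine Filter.Eventually.of_forall (fun t ht => ?_)
    rw [Set.uIoc_of_le (by positivity)] at ht
    obtain ⟨ht0, ht1⟩ := ht
    have hs0 : 0 ≤ Real.sin t := Real.sin_nonneg_of_nonneg_of_le_pi ht0.le (by linarith [pi_pos])
    have hs1 : Real.sin t ≤ 1 := Real.sin_le_one t
    have hc : 0 ≤ Real.cos t := Real.cos_nonneg_of_mem_Icc ⟨by linarith [pi_pos, ht0], ht1⟩
    have hcos2 : Real.cos t^2 = 1 - Real.sin t^2 := by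
      have := Real.sin_sq_add_cos_sq t; linarith
    by_cases hs : Real.sin t = 1
    · have hct : Real.cos t = 0 := by nlinarith
      simp only [hs, hct, sub_self, zero_mul, zero_div]
      exact tendsto_const_nhds
    · have hslt : Real.sin t < 1 := lt_of_le_of_ne hs1 hs
      have hpos : 0 < 1 - Real.sin t^2 := by nlinarith
      have hspos : 0 < Real.sqrt (1 - Real.sin t^2) := Real.sqrt_pos.mpr hpos
      have hsq2 : Real.sqrt (1 - Real.sin t^2)^2 = 1 - Real.sin t^2 := Real.sq_sqrt hpos.le
      have hcval : Real.cos t = Real.sqrt (1 - Real.sin t^2) := by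
        rw [← hcos2, Real.sqrt_sq hc]
      have heq : Real.cos t / (1 + Real.sin t)
          = (1 - Real.sin t) * (1 / Real.sqrt (1 - 1^2 * Real.sin t^2)) := by
        rw [one_pow, one_mul, hcval]
        rw [div_eq_iff (by linarith : (1:ℝ) + Real.sin t ≠ 0)] at *
        field_simp
        nlinarith [hsq2]
      rw [heq]
      have hcont : ContinuousAt (fun k : ℝ =>
          (1 - Real.sin t) * (1 / Real.sqrt (1 - k^2 * Real.sin t^2))) 1 := by
        apply continuousAt_const.mul
        apply continuousAt_const.div
        · exact Real.continuous_sqrt.continuousAt.comp (by fun_prop)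
        · simp only [one_pow]
          exact ne_of_gt (Real.sqrt_pos.mpr (by nlinarith))
      exact hcont.tendsto.mono_left nhdsWithin_le_nhds

lemma pos_aux2 {k t : ℝ} (hk : k^2 < 1) : 0 < 1 - k^2 * Real.sin t^2 := by
  nlinarith [Real.sin_sq_le_one t, sq_nonneg k, sq_nonneg (Real.sin t)]

lemma hmem_aux : ∀ᶠ k : ℝ in nhdsWithin 1 (Set.Iio 1), k ∈ Set.Ioo (1/2 : ℝ) 1 := by
  rw [eventually_iff, mem_nhdsWithin]
  exact ⟨Set.Ioi (1/2:ℝ), isOpen_Ioi, by norm_num, fun x hx => ⟨hx.1, hx.2⟩⟩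

-- split of K
lemma Ksplit {k : ℝ} (hk0 : 1/2 < k) (hk1 : k < 1)
    (hA : ∫ t in (0:ℝ)..(π/2), Real.sin t * (1 / Real.sqrt (1 - k^2 * Real.sin t^2))
      = (1/k) * Real.log ((1+k) / Real.sqrt (1 - k^2))) :
    (∫ t in (0:ℝ)..(π/2), 1 / Real.sqrt (1 - k^2 * Real.sin t^2))
      = (1/k) * Real.log ((1+k) / Real.sqrt (1 - k^2))
        + ∫ t in (0:ℝ)..(π/2), (1 - Real.sin t) * (1 / Real.sqrt (1 - k^2 * Real.sin t^2)) := by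
  have hk2 : k^2 < 1 := by nlinarith
  have hc : Continuous (fun t => 1 / Real.sqrt (1 - k^2 * Real.sin t^2)) := by
    apply continuous_const.div (Real.continuous_sqrt.comp (by continuity))
    intro t; exact ne_of_gt (Real.sqrt_pos.mpr (pos_aux2 hk2))
  rw [← hA, ← intervalIntegral.integral_add (f := fun t => Real.sin t * (1 / Real.sqrt (1 - k^2 * Real.sin t^2)))
    (g := fun t => (1 - Real.sin t) * (1 / Real.sqrt (1 - k^2 * Real.sin t^2)))
    ((continuous_sin.mul hc).intervalIntegrable 0 (π/2))
    (((continuous_const.sub continuous_sin).mul hc).intervalIntegrable 0 (π/2))]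
  apply intervalIntegral.integral_congr
  intro t _
  ring

lemma philim :
    Tendsto (fun k : ℝ => (1/k) * Real.log ((1+k) / Real.sqrt (1 - k^2))
        - Real.log (4 / Real.sqrt (1 - k^2)))
      (nhdsWithin 1 (Set.Iio 1)) (nhds (-Real.log 2)) := by
  have key : ∀ k : ℝ, k ∈ Set.Ioo (1/2:ℝ) 1 →
      (1/k) * Real.log ((1+k) / Real.sqrt (1 - k^2)) - Real.log (4 / Real.sqrt (1 - k^2))
      = (1/k) * Real.log (1+k) - Real.log 4
        + (-(1/(2*k))) * (Real.log (1-k) * (1-k) + (1-k) * Real.log (1+k)) := by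
    intro k hk
    obtain ⟨h1, h2⟩ := hk
    have hk0 : 0 < k := by linarith
    have h1k : 0 < 1 + k := by linarith
    have h1k' : 0 < 1 - k := by linarith
    have hprod : (0:ℝ) < 1 - k^2 := by nlinarith
    have hsqrt : 0 < Real.sqrt (1 - k^2) := Real.sqrt_pos.mpr hprod
    rw [Real.log_div (by positivity) (ne_of_gt hsqrt),
        Real.log_div (by norm_num) (ne_of_gt hsqrt),
        Real.log_sqrt hprod.le,
        show (1:ℝ) - k^2 = (1-k)*(1+k) by ring,
        Real.log_mul (ne_of_gt h1k') (ne_of_gt h1k)]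
    field_simp
    ring
  have h1 : Tendsto (fun k : ℝ => (1/k) * Real.log (1+k)) (nhdsWithin 1 (Set.Iio 1))
      (nhds (Real.log 2)) := by
    have : ContinuousAt (fun k : ℝ => (1/k) * Real.log (1+k)) 1 := by
      apply ContinuousAt.mul
      · exact continuousAt_const.div continuousAt_id one_ne_zero
      · exact (Real.continuousAt_log (by norm_num)).comp (by fun_prop)
    have ht : Tendsto (fun k : ℝ => (1/k) * Real.log (1+k)) (nhdsWithin 1 (Set.Iio 1))
        (nhds ((1/1) * Real.log (1+1))) := this.tendsto.mono_left nhdsWithin_le_nhds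
    norm_num at ht
    simpa [one_div] using ht
  have h2 : Tendsto (fun k : ℝ => Real.log (1-k) * (1-k)) (nhdsWithin 1 (Set.Iio 1))
      (nhds 0) := by
    have hsub : Tendsto (fun k : ℝ => 1 - k) (nhdsWithin 1 (Set.Iio 1)) (nhdsWithin 0 (Set.Ioi 0)) := by
      apply tendsto_nhdsWithin_of_tendsto_nhds_of_eventually_within
      · have : Tendsto (fun k : ℝ => 1 - k) (nhds 1) (nhds 0) := by
          simpa using (continuous_id.tendsto (1:ℝ)).const_sub (1:ℝ)
        exact this.mono_left nhdsWithin_le_nhds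
      · filter_upwards [hmem_aux] with k hk
        exact Set.mem_Ioi.mpr (by linarith [hk.2])
    have hlog := tendsto_log_mul_rpow_nhdsGT_zero (r := 1) zero_lt_one
    simp only [Real.rpow_one] at hlog
    exact hlog.comp hsub
  have h3 : Tendsto (fun k : ℝ => (1-k) * Real.log (1+k)) (nhdsWithin 1 (Set.Iio 1))
      (nhds 0) := by
    have ha : Tendsto (fun k : ℝ => 1 - k) (nhdsWithin 1 (Set.Iio 1)) (nhds 0) := by
      have : Tendsto (fun k : ℝ => 1 - k) (nhds 1) (nhds 0) := by
        simpa using (continuous_id.tendsto (1:ℝ)).const_sub (1:ℝ)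
      exact this.mono_left nhdsWithin_le_nhds
    have hb : Tendsto (fun k : ℝ => Real.log (1+k)) (nhdsWithin 1 (Set.Iio 1))
        (nhds (Real.log 2)) := by
      have : ContinuousAt (fun k : ℝ => Real.log (1+k)) 1 :=
        (Real.continuousAt_log (by norm_num)).comp (by fun_prop)
      have ht : Tendsto (fun k : ℝ => Real.log (1+k)) (nhdsWithin 1 (Set.Iio 1))
          (nhds (Real.log (1+1))) := this.tendsto.mono_left nhdsWithin_le_nhds
      norm_num at ht
      exact ht
    simpa using ha.mul hb
  have h4 : Tendsto (fun k : ℝ => -(1/(2*k))) (nhdsWithin 1 (Set.Iio 1)) (nhds (-(1/2))) := by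
    have : ContinuousAt (fun k : ℝ => -(1/(2*k))) 1 := by
      apply ContinuousAt.neg
      exact continuousAt_const.div (by fun_prop) (by norm_num)
    have ht : Tendsto (fun k : ℝ => -(1/(2*k))) (nhdsWithin 1 (Set.Iio 1))
        (nhds (-(1/(2*1)))) := this.tendsto.mono_left nhdsWithin_le_nhds
    norm_num at ht ⊢
    exact ht
  have hfull := (h1.sub (tendsto_const_nhds (x := Real.log 4))).add (h4.mul (h2.add h3))
  have : Real.log 2 - Real.log 4 + (-(1/2)) * (0 + 0) = -Real.log 2 := by
    rw [show (4:ℝ) = 2^2 by norm_num, Real.log_pow]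
    push_cast
    ring
  rw [this] at hfull
  apply hfull.congr'
  filter_upwards [hmem_aux] with k hk
  exact (key k hk).symm

open Real Filter in
theorem complete_elliptic_log_asymptotic :
    Tendsto (fun k : ℝ => ∫ t in (0:ℝ)..(π / 2), 1 / Real.sqrt (1 - k ^ 2 * Real.sin t ^ 2))
      (nhdsWithin 1 (Set.Iio 1)) atTop ∧
    Tendsto (fun k : ℝ =>
        (∫ t in (0:ℝ)..(π / 2), 1 / Real.sqrt (1 - k ^ 2 * Real.sin t ^ 2)) -
          Real.log (4 / Real.sqrt (1 - k ^ 2)))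
      (nhdsWithin 1 (Set.Iio 1)) (nhds 0) := by
  have hsecond : Tendsto (fun k : ℝ =>
      (∫ t in (0:ℝ)..(π / 2), 1 / Real.sqrt (1 - k ^ 2 * Real.sin t ^ 2)) -
        Real.log (4 / Real.sqrt (1 - k ^ 2)))
      (nhdsWithin 1 (Set.Iio 1)) (nhds 0) := by
    have hsum := philim.add Btendsto
    rw [show -Real.log 2 + Real.log 2 = 0 by ring] at hsum
    apply hsum.congr'
    filter_upwards [hmem_aux] with k hk
    have h := Ksplit hk.1 hk.2 (integralA (by linarith [hk.1]) hk.2)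
    rw [h]
    ring
  have hL : Tendsto (fun k : ℝ => Real.log (4 / Real.sqrt (1 - k ^ 2)))
      (nhdsWithin 1 (Set.Iio 1)) atTop := by
    have h0 : Tendsto (fun k : ℝ => 1 - k ^ 2) (nhdsWithin 1 (Set.Iio 1))
        (nhdsWithin 0 (Set.Ioi 0)) := by
      apply tendsto_nhdsWithin_of_tendsto_nhds_of_eventually_within
      · have hca : ContinuousAt (fun k : ℝ => 1 - k ^ 2) 1 := by fun_prop
        have : Tendsto (fun k : ℝ => 1 - k ^ 2) (nhds 1) (nhds 0) := by
          simpa using hca.tendsto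
        exact this.mono_left nhdsWithin_le_nhds
      · filter_upwards [hmem_aux] with k hk
        exact Set.mem_Ioi.mpr (by nlinarith [hk.1, hk.2])
    have h1 : Tendsto Real.sqrt (nhdsWithin 0 (Set.Ioi 0)) (nhdsWithin 0 (Set.Ioi 0)) := by
      apply tendsto_nhdsWithin_of_tendsto_nhds_of_eventually_within
      · have := Real.continuous_sqrt.tendsto 0
        simp only [Real.sqrt_zero] at this
        exact this.mono_left nhdsWithin_le_nhds
      · filter_upwards [self_mem_nhdsWithin] with x hx
        exact Set.mem_Ioi.mpr (Real.sqrt_pos.mpr hx)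
    have h2 : Tendsto (fun x : ℝ => 4 * x⁻¹) (nhdsWithin 0 (Set.Ioi 0)) atTop :=
      tendsto_inv_nhdsGT_zero.const_mul_atTop (by norm_num)
    have h3 := Real.tendsto_log_atTop.comp (h2.comp (h1.comp h0))
    simpa [Function.comp_def, div_eq_mul_inv] using h3
  refine ⟨?_, hsecond⟩
  have := hsecond.add_atTop hL
  simpa using this
end

section
/- The scaling function G(x) = x/(k(x)·[K(k(x)) - F((π - arcsin x)/2, k(x))]), where β₁ = arcsin x, f₊ = 2/(cos²β₁ + 1/cos²β₁), and k(x)² = 2(1-f₊²)/[(1-cos β₁)f₊² + 2(1-f₊²)], satisfies x·G(x) → 1 as x → 0⁺. -/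
open Real

/-- The elliptic modulus `k(x)` associated with spacing ratio `x = d/ℓ`. -/
noncomputable def dominoModulus (x : ℝ) : ℝ :=
  Real.sqrt (2 * (1 - (2 / (cos (arcsin x) ^ 2 + 1 / cos (arcsin x) ^ 2)) ^ 2) /
    ((1 - cos (arcsin x)) * (2 / (cos (arcsin x) ^ 2 + 1 / cos (arcsin x) ^ 2)) ^ 2 +
      2 * (1 - (2 / (cos (arcsin x) ^ 2 + 1 / cos (arcsin x) ^ 2)) ^ 2)))

/-- The incomplete elliptic integral of the first kind `F(φ, k)`. -/
noncomputable def ellipticF (φ k : ℝ) : ℝ :=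
  ∫ t in (0:ℝ)..φ, 1 / Real.sqrt (1 - k ^ 2 * Real.sin t ^ 2)

/-- The scaling function `G(x)` for the domino wave speed. -/
noncomputable def dominoG (x : ℝ) : ℝ :=
  x / (dominoModulus x *
    (ellipticF (π / 2) (dominoModulus x) - ellipticF ((π - arcsin x) / 2) (dominoModulus x)))

/-- Auxiliary: `Hfun x = k(x)^2 / x^2` as an expression continuous near `0`. -/
noncomputable def Hfun (x : ℝ) : ℝ :=
  2*(1+Real.sqrt (1-x^2)^2)^2*(1+Real.sqrt (1-x^2)) /
  (4*Real.sqrt (1-x^2)^4 +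
    2*(1-Real.sqrt (1-x^2)^2)*(1+Real.sqrt (1-x^2)^2)^2*(1+Real.sqrt (1-x^2)))

lemma key_alg (c : ℝ) (h0 : 0 < c) (h1 : c < 1) :
    2 * (1 - (2 / (c^2 + 1/c^2))^2) /
      ((1 - c) * (2/(c^2+1/c^2))^2 + 2*(1 - (2/(c^2+1/c^2))^2))
    = (1 - c^2) * (2*(1+c^2)^2*(1+c) / (4*c^4 + 2*(1-c^2)*(1+c^2)^2*(1+c))) := by
  have hc : c ≠ 0 := ne_of_gt h0
  have hc4 : (0:ℝ) < c^4 + 1 := by positivity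
  have hfeq : 2 / (c^2 + 1/c^2) = 2*c^2/(c^4+1) := by
    rw [div_eq_div_iff (by positivity) (ne_of_gt hc4)]; field_simp
  rw [hfeq]
  set f : ℝ := 2*c^2/(c^4+1) with hf
  have hf_pos : 0 < f := by positivity
  have hf_le : f ≤ 1 := by
    rw [hf, div_le_one hc4]; nlinarith [sq_nonneg (c^2 - 1)]
  have h1f : 0 ≤ 1 - f^2 := by nlinarith
  have hD2 : (0:ℝ) < (1 - c) * f^2 + 2*(1 - f^2) := by nlinarith
  have hD3 : (0:ℝ) < 4*c^4 + 2*(1-c^2)*(1+c^2)^2*(1+c) := by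
    have h5 : (0:ℝ) ≤ 2*(1-c^2)*(1+c^2)^2*(1+c) := by
      have : (0:ℝ) ≤ 1 - c^2 := by nlinarith
      positivity
    nlinarith [pow_pos h0 4]
  rw [← mul_div_assoc, div_eq_div_iff (ne_of_gt hD2) (ne_of_gt hD3), hf]
  field_simp
  ring

lemma modulus_eq {x : ℝ} (hx0 : 0 < x) (hx1 : x < 1) :
    dominoModulus x = x * Real.sqrt (Hfun x) := by
  have h1x : (0:ℝ) < 1 - x^2 := by nlinarith
  have hc0 : 0 < Real.sqrt (1-x^2) := Real.sqrt_pos.mpr h1x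
  have hc1 : Real.sqrt (1-x^2) < 1 := by
    calc Real.sqrt (1-x^2) < Real.sqrt 1 := Real.sqrt_lt_sqrt (by positivity) (by nlinarith)
    _ = 1 := Real.sqrt_one
  have hcs : Real.sqrt (1-x^2) ^ 2 = 1 - x^2 := Real.sq_sqrt h1x.le
  unfold dominoModulus Hfun
  rw [Real.cos_arcsin]
  rw [key_alg _ hc0 hc1, show 1 - Real.sqrt (1-x^2)^2 = x^2 by rw [hcs]; ring]
  rw [Real.sqrt_mul (sq_nonneg x), Real.sqrt_sq hx0.le]

open Filter in
lemma Hfun_tendsto : Tendsto Hfun (nhdsWithin 0 (Set.Ioi 0)) (nhds 4) := by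
  have hca : ContinuousAt Hfun 0 := by
    unfold Hfun
    apply ContinuousAt.div
    · fun_prop
    · fun_prop
    · norm_num
  have h0 : Hfun 0 = 4 := by norm_num [Hfun]
  have := hca.tendsto
  rw [h0] at this
  exact this.mono_left nhdsWithin_le_nhds

open Filter in
lemma arcsin_ratio :
    Tendsto (fun x : ℝ => x / arcsin x) (nhdsWithin 0 (Set.Ioi 0)) (nhds 1) := by
  have hd : HasDerivAt Real.arcsin 1 0 := by
    have h := Real.hasDerivAt_arcsin (by norm_num : (0:ℝ) ≠ -1) (by norm_num : (0:ℝ) ≠ 1)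
    simpa using h
  have hs : Tendsto (slope Real.arcsin 0) (nhdsWithin 0 {(0:ℝ)}ᶜ) (nhds 1) :=
    hasDerivAt_iff_tendsto_slope.mp hd
  have hs' : Tendsto (slope Real.arcsin 0) (nhdsWithin 0 (Set.Ioi 0)) (nhds 1) :=
    hs.mono_left (nhdsWithin_mono 0 (fun y hy => ne_of_gt hy))
  have hinv := hs'.inv₀ (by norm_num)
  rw [inv_one] at hinv
  refine hinv.congr (fun y => ?_)
  simp [slope_def_field, inv_div, Real.arcsin_zero]

lemma gcont {k : ℝ} (hk : k^2 < 1) :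
    Continuous (fun t => 1 / Real.sqrt (1 - k^2 * Real.sin t^2)) := by
  apply Continuous.div continuous_const
  · fun_prop
  · intro t
    have h1 : k^2 * Real.sin t^2 ≤ k^2 * 1 := by
      nlinarith [Real.sin_sq_le_one t, sq_nonneg k]
    exact ne_of_gt (Real.sqrt_pos.mpr (by nlinarith))

lemma esub {k φ : ℝ} (hk : k^2 < 1) :
    ellipticF (π/2) k - ellipticF φ k
      = ∫ t in φ..(π/2), 1 / Real.sqrt (1 - k^2 * Real.sin t^2) := by
  unfold ellipticF
  exact intervalIntegral.integral_interval_sub_left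
    ((gcont hk).intervalIntegrable _ _) ((gcont hk).intervalIntegrable _ _)

lemma ibounds {k φ : ℝ} (hk : k^2 < 1) (hφ : φ ≤ π/2) :
    (π/2 - φ) ≤ (∫ t in φ..(π/2), 1 / Real.sqrt (1 - k^2 * Real.sin t^2)) ∧
    (∫ t in φ..(π/2), 1 / Real.sqrt (1 - k^2 * Real.sin t^2))
      ≤ (π/2 - φ) * (1 / Real.sqrt (1 - k^2)) := by
  have hpt : ∀ t : ℝ, 0 < 1 - k^2 * Real.sin t^2 := by
    intro t
    nlinarith [Real.sin_sq_le_one t, sq_nonneg k]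
  constructor
  · have h := intervalIntegral.integral_mono_on hφ
      ((intervalIntegrable_const : IntervalIntegrable (fun _ => (1:ℝ)) MeasureTheory.volume φ (π/2)))
      ((gcont hk).intervalIntegrable _ _) (fun t _ => ?_)
    · simpa using h
    · have hle : Real.sqrt (1 - k^2 * Real.sin t^2) ≤ 1 := by
        conv_rhs => rw [← Real.sqrt_one]
        apply Real.sqrt_le_sqrt
        nlinarith [sq_nonneg (Real.sin t), sq_nonneg k]
      have hpos : 0 < Real.sqrt (1 - k^2 * Real.sin t^2) := Real.sqrt_pos.mpr (hpt t)
      rw [le_div_iff₀ hpos]; linarith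
  · have h := intervalIntegral.integral_mono_on hφ
      ((gcont hk).intervalIntegrable _ _)
      (intervalIntegrable_const :
        IntervalIntegrable (fun _ => 1 / Real.sqrt (1 - k^2)) MeasureTheory.volume φ (π/2))
      (fun t _ => ?_)
    · simpa using h
    · apply one_div_le_one_div_of_le (Real.sqrt_pos.mpr (by nlinarith))
      apply Real.sqrt_le_sqrt
      nlinarith [Real.sin_sq_le_one t, sq_nonneg k]

open Filter in
theorem scaling_function_small_spacing :
    Tendsto (fun x : ℝ => x * dominoG x) (nhdsWithin 0 (Set.Ioi 0)) (nhds 1) := by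
  set l := nhdsWithin (0:ℝ) (Set.Ioi 0) with hl
  have hx_mem : ∀ᶠ x in l, x ∈ Set.Ioo (0:ℝ) (1/3) :=
    Ioo_mem_nhdsGT_of_mem ⟨le_refl 0, by norm_num⟩
  have hH_mem : ∀ᶠ x in l, Hfun x ∈ Set.Ioo (1:ℝ) 9 :=
    Hfun_tendsto (Ioo_mem_nhds (by norm_num) (by norm_num))
  have hxlim : Tendsto (fun x : ℝ => x) l (nhds 0) :=
    tendsto_id.mono_left nhdsWithin_le_nhds
  -- √(Hfun x) → 2
  have hsqrtH : Tendsto (fun x => Real.sqrt (Hfun x)) l (nhds 2) := by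
    have := (Real.continuous_sqrt.tendsto 4).comp Hfun_tendsto
    simpa [Function.comp_def, show Real.sqrt 4 = 2 by
      rw [show (4:ℝ) = 2^2 by norm_num, Real.sqrt_sq (by norm_num : (0:ℝ) ≤ 2)]] using this
  -- dominoModulus → 0
  have hk0 : Tendsto (fun x => dominoModulus x) l (nhds 0) := by
    have hmul : Tendsto (fun x => x * Real.sqrt (Hfun x)) l (nhds 0) := by
      simpa using hxlim.mul hsqrtH
    refine hmul.congr' ?_
    filter_upwards [hx_mem] with x hx
    exact (modulus_eq hx.1 (by linarith [hx.2] : x < 1)).symm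
  -- √(1 - k²) → 1
  have hsq1 : Tendsto (fun x => Real.sqrt (1 - dominoModulus x ^ 2)) l (nhds 1) := by
    have h1 : Tendsto (fun x => 1 - dominoModulus x ^ 2) l (nhds 1) := by
      simpa using (tendsto_const_nhds (x := (1:ℝ)) (f := l)).sub (hk0.pow 2)
    have := (Real.continuous_sqrt.tendsto 1).comp h1
    simpa [Function.comp_def] using this
  -- the upper bounding function
  set up : ℝ → ℝ := fun x => x^2 / (dominoModulus x * (arcsin x / 2)) with hup_def
  have hup : Tendsto up l (nhds 1) := by
    have haux : Tendsto (fun x => (x / arcsin x) * (2 / Real.sqrt (Hfun x))) l (nhds 1) := by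
      have h2 : Tendsto (fun x => 2 / Real.sqrt (Hfun x)) l (nhds 1) := by
        have := (tendsto_const_nhds (x := (2:ℝ)) (f := l)).div hsqrtH (by norm_num)
        simpa [Pi.div_def] using this
      simpa using arcsin_ratio.mul h2
    refine haux.congr' ?_
    filter_upwards [hx_mem, hH_mem] with x hx hH
    have hx0 : 0 < x := hx.1
    have hx1 : x < 1 := by linarith [hx.2]
    have harc : 0 < arcsin x := Real.arcsin_pos.mpr hx0
    have hs0 : 0 < Real.sqrt (Hfun x) := Real.sqrt_pos.mpr (by linarith [hH.1])
    rw [hup_def]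
    simp only
    rw [modulus_eq hx0 hx1]
    field_simp
  -- the lower bounding function
  set low : ℝ → ℝ := fun x => up x * Real.sqrt (1 - dominoModulus x ^ 2) with hlow_def
  have hlow : Tendsto low l (nhds 1) := by
    simpa using hup.mul hsq1
  -- squeeze
  refine tendsto_of_tendsto_of_tendsto_of_le_of_le' hlow hup ?_ ?_
  all_goals {
    filter_upwards [hx_mem, hH_mem] with x hx hH
    have hx0 : 0 < x := hx.1
    have hx13 : x < 1/3 := hx.2
    have hx1 : x < 1 := by linarith
    have harc : 0 < arcsin x := Real.arcsin_pos.mpr hx0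
    have harc2 : arcsin x ≤ π/2 := Real.arcsin_le_pi_div_two x
    set k := dominoModulus x with hk_def
    have hkeq : k = x * Real.sqrt (Hfun x) := modulus_eq hx0 hx1
    have hs1 : 1 < Real.sqrt (Hfun x) := by
      calc (1:ℝ) = Real.sqrt 1 := Real.sqrt_one.symm
      _ < Real.sqrt (Hfun x) := Real.sqrt_lt_sqrt (by norm_num) hH.1
    have hs3 : Real.sqrt (Hfun x) < 3 := by
      calc Real.sqrt (Hfun x) < Real.sqrt 9 := by
            apply Real.sqrt_lt_sqrt (by linarith [hH.1]) hH.2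
      _ = 3 := by rw [show (9:ℝ) = 3^2 by norm_num, Real.sqrt_sq (by norm_num : (0:ℝ) ≤ 3)]
    have hk_pos : 0 < k := by rw [hkeq]; positivity
    have hk_lt1 : k < 1 := by
      rw [hkeq]; nlinarith
    have hkk : k^2 < 1 := by nlinarith
    have hφ : (π - arcsin x)/2 ≤ π/2 := by linarith
    have hδ : π/2 - (π - arcsin x)/2 = arcsin x / 2 := by ring
    obtain ⟨hI1, hI2⟩ := ibounds hkk hφ
    rw [hδ] at hI1 hI2
    set I := ∫ t in ((π - arcsin x)/2)..(π/2), 1 / Real.sqrt (1 - k^2 * Real.sin t^2) with hI_def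
    have hI_pos : 0 < I := lt_of_lt_of_le (by linarith) hI1
    have hxG : x * dominoG x = x^2 / (k * I) := by
      rw [dominoG, ← hk_def, esub hkk, ← hI_def]; ring
    have hss : 0 < Real.sqrt (1 - k^2) := Real.sqrt_pos.mpr (by nlinarith)
    first
    | · -- lower bound : low x ≤ x * dominoG x
        rw [hxG, hlow_def, hup_def]
        simp only
        have h3 : Real.sqrt (1 - k^2) * I ≤ arcsin x / 2 := by
          calc Real.sqrt (1 - k^2) * I
              ≤ Real.sqrt (1 - k^2) * (arcsin x / 2 * (1 / Real.sqrt (1 - k^2))) :=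
                mul_le_mul_of_nonneg_left hI2 hss.le
          _ = arcsin x / 2 := by field_simp
        rw [div_mul_eq_mul_div, div_le_div_iff₀ (by positivity) (by positivity)]
        nlinarith [mul_le_mul_of_nonneg_left h3 (show (0:ℝ) ≤ x^2 * k by positivity)]
    | · -- upper bound : x * dominoG x ≤ up x
        rw [hxG, hup_def]
        simp only
        gcongr
  }
end
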